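/- For any p ∈ [0,1), the sequence S_n - (p/(1+p))n converges to p²/(1+p)² as n → ∞, with geometric rate p. -/

import Mathlib

/-- For `p ∈ [0,1)`, the sequence `S n - (p/(1+p))n` converges to `p²/(1+p)²`
as `n → ∞`, with geometric rate `p`. -/
theorem stmt_18 (p : ℝ) (hp0 : 0 ≤ p) (hp1 : p < 1) (S : ℕ → ℝ)
    (h0 : S 0 = 0) (h1 : S 1 = p)
    (hrec : ∀ n : ℕ, S (n + 2) = p * (1 + S n) + (1 - p) * S (n + 1)) :
    Filter.Tendsto (fun n : ℕ => S n - (p / (1 + p)) * n)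
      Filter.atTop (nhds (p ^ 2 / (1 + p) ^ 2)) ∧
      ∀ n : ℕ, |S n - (p / (1 + p)) * n - p ^ 2 / (1 + p) ^ 2|
        ≤ (p ^ 2 / (1 + p) ^ 2) * p ^ n := by
  have hp : (1 : ℝ) + p ≠ 0 := by linarith
  have key : ∀ n : ℕ, S n = (p / (1 + p)) * n + (p ^ 2 / (1 + p) ^ 2) * (1 - (-p) ^ n) := by
    intro n
    induction n using Nat.twoStepInduction with
    | zero => simp [h0]
    | one => field_simp [h1]; rw [h1]; ring
    | more n ih1 ih2 =>
      rw [hrec n, ih1, ih2]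
      push_cast
      field_simp
      ring
  have hdiff : ∀ n : ℕ, S n - (p / (1 + p)) * n - p ^ 2 / (1 + p) ^ 2
      = -(p ^ 2 / (1 + p) ^ 2) * (-p) ^ n := by
    intro n; rw [key n]; ring
  constructor
  · have h : Filter.Tendsto (fun n : ℕ => p ^ 2 / (1 + p) ^ 2
        + -(p ^ 2 / (1 + p) ^ 2) * (-p) ^ n) Filter.atTop
        (nhds (p ^ 2 / (1 + p) ^ 2 + -(p ^ 2 / (1 + p) ^ 2) * 0)) := by
      exact Filter.Tendsto.const_add _ (Filter.Tendsto.const_mul _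
        (tendsto_pow_atTop_nhds_zero_of_abs_lt_one (by rw [abs_neg, abs_of_nonneg hp0]; exact hp1)))
    simp only [mul_zero, add_zero] at h
    convert h using 2 with n
    linarith [hdiff n]
  · intro n
    rw [hdiff n, abs_mul, abs_neg, abs_pow, abs_neg, abs_of_nonneg hp0,
      abs_of_nonneg (by positivity : (0:ℝ) ≤ p ^ 2 / (1 + p) ^ 2)]
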